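/- Let X be a totally ordered set and F : X^n → X an n-associative, symmetric, nondecreasing, idempotent function. Then F is extremal: F(x_1,...,x_n) = G(min_i x_i, max_i x_i) where G(a,c) = F(a,(n-1)·c), and consequently the value of F depends only on the minimum and maximum of its arguments. -/
import Mathlib


/-- `innerApp n F x i` is `F (x i, x (i+1), ..., x (i+n-1))`. -/
def innerApp {X : Type*} (n : ℕ) (F : (Fin n → X) → X) (x : ℕ → X) (i : ℕ) : X :=
  F (fun k => x (i + (k : ℕ)))

/-- `compApp n F x i` is `F (x 0, ..., x (i-1), F (x i, ..., x (i+n-1)), x (i+n), ..., x (2n-2))`,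
i.e. `F` applied to the `(2n-1)`-tuple `x 0, ..., x (2n-2)` with the inner `F` at position `i`. -/
def compApp {X : Type*} (n : ℕ) (F : (Fin n → X) → X) (x : ℕ → X) (i : ℕ) : X :=
  F (fun j => if (j : ℕ) < i then x (j : ℕ)
      else if (j : ℕ) = i then innerApp n F x i
      else x ((j : ℕ) + n - 1))

/-- `F` is `n`-associative. -/
def NAssoc {X : Type*} (n : ℕ) (F : (Fin n → X) → X) : Prop :=
  ∀ (x : ℕ → X) (i : ℕ), i ≤ n - 1 → compApp n F x i = compApp n F x 0

/-- `F` is idempotent. -/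
def Idem {X : Type*} (n : ℕ) (F : (Fin n → X) → X) : Prop :=
  ∀ a : X, F (fun _ => a) = a

/-- `F` is nondecreasing in each variable. -/
def Nondecr {X : Type*} [Preorder X] (n : ℕ) (F : (Fin n → X) → X) : Prop :=
  ∀ x y : Fin n → X, (∀ j, x j ≤ y j) → F x ≤ F y

/-- `F` is monotone: every unary section is order-preserving or order-reversing. -/
def MonoSec {X : Type*} [Preorder X] (n : ℕ) (F : (Fin n → X) → X) : Prop :=
  ∀ (i : Fin n) (a : Fin n → X),
    Monotone (fun t => F (Function.update a i t)) ∨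
      Antitone (fun t => F (Function.update a i t))

/-- `F` is quasitrivial. -/
def Quasitrivial {X : Type*} (n : ℕ) (F : (Fin n → X) → X) : Prop :=
  ∀ x : Fin n → X, ∃ j, F x = x j

/-- `F` is symmetric. -/
def Symm {X : Type*} (n : ℕ) (F : (Fin n → X) → X) : Prop :=
  ∀ (σ : Equiv.Perm (Fin n)) (x : Fin n → X), F (x ∘ σ) = F x

/-- `iterComp G x k = x 0 ∘ x 1 ∘ ... ∘ x k` where `a ∘ b = G a b`. -/
def iterComp {X : Type*} (G : X → X → X) (x : ℕ → X) : ℕ → X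
  | 0 => x 0
  | k+1 => G (iterComp G x k) (x (k+1))

/-- `F` is derived from the binary operation `G`:
`F (x 0, ..., x (n-1)) = x 0 ∘ x 1 ∘ ... ∘ x (n-1)`. -/
def DerivedFrom {X : Type*} (n : ℕ) (F : (Fin n → X) → X) (G : X → X → X) : Prop :=
  ∀ x : ℕ → X, F (fun j => x (j : ℕ)) = iterComp G x (n - 1)

/-- `e` is a neutral element of the `n`-ary operation `F`. -/
def NeutralN {X : Type*} (n : ℕ) (F : (Fin n → X) → X) (e : X) : Prop :=
  ∀ (i : Fin n) (x : X), F (fun j => if j = i then x else e) = x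

theorem stmt19 {X : Type*} [LinearOrder X] (n : ℕ) (hn : 2 ≤ n)
    (F : (Fin n → X) → X) (hA : NAssoc n F) (hS : Symm n F)
    (hM : Nondecr n F) (hI : Idem n F) :
    (∀ x : Fin n → X,
      F x = F (fun j => if (j : ℕ) = 0
        then Finset.univ.inf' ⟨⟨0, by omega⟩, Finset.mem_univ _⟩ x
        else Finset.univ.sup' ⟨⟨0, by omega⟩, Finset.mem_univ _⟩ x)) ∧
    (∀ x y : Fin n → X,
      Finset.univ.inf' ⟨⟨0, by omega⟩, Finset.mem_univ _⟩ x =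
        Finset.univ.inf' ⟨⟨0, by omega⟩, Finset.mem_univ _⟩ y →
      Finset.univ.sup' ⟨⟨0, by omega⟩, Finset.mem_univ _⟩ x =
        Finset.univ.sup' ⟨⟨0, by omega⟩, Finset.mem_univ _⟩ y →
      F x = F y) := by
  have h0 : 0 < n := by omega
  -- swapping the distinguished position in a "two-valued" tuple
  have hswap : ∀ (i k : Fin n) (u v : X),
      F (fun j => if j = i then u else v) = F (fun j => if j = k then u else v) := by
    intro i k u v
    have h := hS (Equiv.swap i k) (fun j => if j = k then u else v)
    rw [← h]
    congr 1
    funext j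
    have hiff : (Equiv.swap i k j = k) ↔ j = i := by
      constructor
      · intro hj
        exact (Equiv.swap i k).injective (hj.trans (Equiv.swap_apply_left i k).symm)
      · rintro rfl; exact Equiv.swap_apply_left _ _
    simp only [Function.comp_apply]
    by_cases hji : j = i
    · rw [if_pos hji, if_pos (hiff.mpr hji)]
    · rw [if_neg hji, if_neg (fun h => hji (hiff.mp h))]
  have key : ∀ x : Fin n → X,
      F x = F (fun j => if (j : ℕ) = 0
        then Finset.univ.inf' ⟨⟨0, by omega⟩, Finset.mem_univ _⟩ x
        else Finset.univ.sup' ⟨⟨0, by omega⟩, Finset.mem_univ _⟩ x) := by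
    intro x
    set a := Finset.univ.inf' (⟨⟨0, by omega⟩, Finset.mem_univ _⟩ :
      (Finset.univ : Finset (Fin n)).Nonempty) x with ha
    set c := Finset.univ.sup' (⟨⟨0, by omega⟩, Finset.mem_univ _⟩ :
      (Finset.univ : Finset (Fin n)).Nonempty) x with hc
    obtain ⟨i₀, -, hi₀⟩ := Finset.exists_mem_eq_inf' (⟨⟨0, h0⟩, Finset.mem_univ _⟩ :
      (Finset.univ : Finset (Fin n)).Nonempty) x
    obtain ⟨i₁, -, hi₁⟩ := Finset.exists_mem_eq_sup' (⟨⟨0, h0⟩, Finset.mem_univ _⟩ :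
      (Finset.univ : Finset (Fin n)).Nonempty) x
    have hxi₀ : x i₀ = a := hi₀.symm
    have hxi₁ : x i₁ = c := hi₁.symm
    have hax : ∀ j, a ≤ x j := fun j => Finset.inf'_le _ (Finset.mem_univ j)
    have hxc : ∀ j, x j ≤ c := fun j => Finset.le_sup' _ (Finset.mem_univ j)
    have hac : a ≤ c := (hax i₁).trans (hxc i₁)
    set p0 : Fin n := ⟨0, h0⟩ with hp0
    set pl : Fin n := ⟨n - 1, by omega⟩ with hpl
    set t : Fin n → X := fun j => if j = p0 then a else c with ht
    -- the statement's target equals F t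
    have hjp0 : ∀ j : Fin n, j = p0 ↔ (j : ℕ) = 0 := by
      intro j; rw [hp0, Fin.ext_iff]
    have hjpl : ∀ j : Fin n, j = pl ↔ (j : ℕ) = n - 1 := by
      intro j; rw [hpl, Fin.ext_iff]
    have htarget : (fun j : Fin n => if (j : ℕ) = 0 then a else c) = t := by
      funext j
      simp only [ht, hjp0 j]
    -- F x ≤ F t
    have step1 : F x ≤ F (fun j => if j = i₀ then a else c) := by
      apply hM
      intro j
      by_cases hj : j = i₀
      · subst hj; rw [if_pos rfl, hxi₀]
      · rw [if_neg hj]; exact hxc j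
    have step2 : F (fun j => if j = i₀ then a else c) = F t := hswap i₀ p0 a c
    -- F t ≤ c
    have hFtc : F t ≤ c := by
      have h1 : F t ≤ F (fun _ => c) := by
        apply hM
        intro j
        by_cases hj : j = p0
        · rw [ht]; simp only [if_pos hj]; exact hac
        · rw [ht]; simp only [if_neg hj]; exact le_rfl
      rw [hI c] at h1
      exact h1
    -- associativity on z = (a^n, c^(n-1))
    set z : ℕ → X := fun i => if i < n then a else c with hz
    have hinner0 : innerApp n F z 0 = a := by
      have he : (fun k : Fin n => z (0 + (k : ℕ))) = fun _ : Fin n => a := by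
        funext k
        have hk : (k : ℕ) < n := k.isLt
        simp only [hz, Nat.zero_add, if_pos hk]
      rw [innerApp, he, hI]
    have e0 : compApp n F z 0 = F t := by
      rw [compApp, hinner0]
      congr 1
      funext j
      by_cases hj : (j : ℕ) = 0
      · simp only [ht, hjp0 j, hj, if_pos, if_neg (show ¬ ((j:ℕ) < 0) by omega), if_true]
        rw [if_neg (show ¬ (0:ℕ) < 0 by omega)]
      · have h2 : ¬ ((j : ℕ) + n - 1 < n) := by omega
        simp only [ht, hjp0 j, hj, hz, if_neg (show ¬ ((j:ℕ) < 0) by omega),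
          if_neg h2, if_false]
    have hinner1 : innerApp n F z (n - 1) = F t := by
      rw [innerApp]
      congr 1
      funext k
      by_cases hk : (k : ℕ) = 0
      · have h1 : n - 1 + (k : ℕ) < n := by omega
        simp only [hz, if_pos h1, ht, hjp0 k, hk, if_true]
        rw [if_pos (show n - 1 + 0 < n by omega)]
      · have h1 : ¬ (n - 1 + (k : ℕ) < n) := by omega
        simp only [hz, if_neg h1, ht, hjp0 k, hk, if_false]
    have e1 : compApp n F z (n - 1) = F (fun j => if j = pl then F t else a) := by
      rw [compApp, hinner1]
      congr 1
      funext j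
      by_cases hj : (j : ℕ) < n - 1
      · have h1 : (j : ℕ) < n := by omega
        have h2 : ¬ j = pl := by rw [hjpl j]; omega
        simp only [if_pos hj, hz, if_pos h1, if_neg h2]
      · have hj2 : (j : ℕ) = n - 1 := by have := j.isLt; omega
        simp only [if_neg hj, if_pos hj2, hjpl j, if_pos hj2]
    have hfix : F (fun j => if j = pl then F t else a) = F t := by
      rw [← e1, ← e0]
      exact hA z (n - 1) le_rfl
    -- F t ≤ F (c at pl, a elsewhere)
    have step3 : F t ≤ F (fun j => if j = pl then c else a) := by
      rw [← hfix]
      apply hM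
      intro j
      by_cases hj : j = pl
      · rw [if_pos hj, if_pos hj]; exact hFtc
      · rw [if_neg hj, if_neg hj]
    have step4 : F (fun j => if j = pl then c else a) = F (fun j => if j = i₁ then c else a) :=
      hswap pl i₁ c a
    have step5 : F (fun j => if j = i₁ then c else a) ≤ F x := by
      apply hM
      intro j
      by_cases hj : j = i₁
      · subst hj; rw [if_pos rfl, hxi₁]
      · rw [if_neg hj]; exact hax j
    have : F x = F t := le_antisymm (step1.trans (le_of_eq step2))
      ((step3.trans (le_of_eq step4)).trans step5)
    rw [htarget]
    exact this
  refine ⟨key, fun x y h1 h2 => ?_⟩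
  rw [key x, key y, h1, h2]
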